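/- Define adi(Γ) as the minimum number of edges that must be added to a graph Γ to obtain a unit interval graph on the same vertex set. Then for the cycle graph C_n with n ≥ 3, adi(C_n) = n − 3. -/

import Mathlib

/-- A graph is a unit interval graph if it admits a unit interval
representation. -/
def IsUnitInterval {V : Type*} (G : SimpleGraph V) : Prop :=
  ∃ x : V → ℝ, ∀ u v : V, G.Adj u v ↔ (u ≠ v ∧ |x u - x v| ≤ 1)

/-- `adi(Γ)`: the minimal number of edges that must be added to `Γ` to obtain
a unit interval graph on the same vertex set. -/
noncomputable def adi {V : Type*} (G : SimpleGraph V) : ℕ :=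
  sInf {k | ∃ G' : SimpleGraph V, G ≤ G' ∧ IsUnitInterval G' ∧
    Nat.card G'.edgeSet = Nat.card G.edgeSet + k}

/-- The cycle graph on `Fin n`. -/
def cycleGraph (n : ℕ) : SimpleGraph (Fin n) :=
  SimpleGraph.fromRel (fun i j => (i.val + 1) % n = j.val)

/-- Discrete intermediate value: a flip point of a predicate. -/
lemma adi_ivt (p : ℕ → Prop) [DecidablePred p] :
    ∀ b a, a ≤ b → p a → ¬ p b → ∃ m, a ≤ m ∧ m + 1 ≤ b ∧ p m ∧ ¬ p (m + 1) := by
  intro b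
  induction b with
  | zero => intro a ha hpa hpb; exact absurd hpa (by interval_cases a; exact hpb)
  | succ b ih =>
    intro a ha hpa hpb
    rcases Nat.lt_or_ge a (b + 1) with h | h
    · by_cases hb : p b
      · exact ⟨b, by omega, by omega, hb, hpb⟩
      · obtain ⟨m, h1, h2, h3, h4⟩ := ih a (by omega) hpa hb
        exact ⟨m, h1, by omega, h3, h4⟩
    · have : a = b + 1 := by omega
      subst this; exact absurd hpa hpb

lemma cycle_adj {n : ℕ} {u v : Fin n} :
    (cycleGraph n).Adj u v ↔ u ≠ v ∧ ((u.val + 1) % n = v.val ∨ (v.val + 1) % n = u.val) := by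
  simp [cycleGraph, SimpleGraph.fromRel_adj]

/-- successor vertex on the cycle -/
def cnxt {n : ℕ} (hn : 0 < n) (i : Fin n) : Fin n :=
  ⟨(i.val + 1) % n, Nat.mod_lt _ hn⟩

lemma cnxt_val {n : ℕ} (hn : 0 < n) (i : Fin n) :
    (cnxt hn i).val = if i.val + 1 < n then i.val + 1 else 0 := by
  have hi := i.isLt
  simp only [cnxt]
  split_ifs with h
  · exact Nat.mod_eq_of_lt h
  · have : i.val + 1 = n := by omega
    rw [this, Nat.mod_self]

lemma cycle_card {n : ℕ} (hn : 3 ≤ n) : Nat.card (cycleGraph n).edgeSet = n := by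
  have h0 : 0 < n := by omega
  have hmem : ∀ i : Fin n, s(i, cnxt h0 i) ∈ (cycleGraph n).edgeSet := by
    intro i
    rw [SimpleGraph.mem_edgeSet, cycle_adj]
    have hv := cnxt_val h0 i
    have hi := i.isLt
    constructor
    · intro h; rw [Fin.ext_iff] at h; split_ifs at hv <;> omega
    · left; simp only [cnxt]
  have : Nat.card (Fin n) = Nat.card (cycleGraph n).edgeSet := by
    apply Nat.card_eq_of_bijective (fun i => ⟨s(i, cnxt h0 i), hmem i⟩)
    constructor
    · intro a b hab
      simp only [Subtype.mk.injEq, Sym2.eq, Sym2.rel_iff', Prod.mk.injEq, Prod.swap_prod_mk] at hab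
      have hva := cnxt_val h0 a
      have hvb := cnxt_val h0 b
      have ha := a.isLt; have hb := b.isLt
      rcases hab with ⟨h1, _⟩ | ⟨h1, h2⟩
      · exact h1
      · rw [Fin.ext_iff] at h1 h2
        apply Fin.ext
        split_ifs at hva hvb <;> omega
    · rintro ⟨e, he⟩
      induction e with
      | _ u v =>
        rw [SimpleGraph.mem_edgeSet, cycle_adj] at he
        obtain ⟨hne, h | h⟩ := he
        · refine ⟨u, Subtype.ext ?_⟩
          have hv : cnxt h0 u = v := Fin.ext h
          simp only [hv]
        · refine ⟨v, Subtype.ext ?_⟩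
          have hv : cnxt h0 v = u := Fin.ext h
          simp only [hv]
          exact Sym2.eq_swap
  rw [← this, Nat.card_eq_fintype_card, Fintype.card_fin]


/-- graph where vertices are adjacent iff their ranks are within 2 -/
def nearG (n : ℕ) (r : Fin n → ℕ) : SimpleGraph (Fin n) where
  Adj u v := u ≠ v ∧ r u ≤ r v + 2 ∧ r v ≤ r u + 2
  symm := by constructor; intro u v ⟨h1, h2, h3⟩; exact ⟨h1.symm, h3, h2⟩
  loopless := by constructor; intro u ⟨h1, _⟩; exact h1 rfl

lemma nearG_unitInterval (n : ℕ) (r : Fin n → ℕ) :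
    ∃ x : Fin n → ℝ, ∀ u v, (nearG n r).Adj u v ↔ (u ≠ v ∧ |x u - x v| ≤ 1) := by
  refine ⟨fun i => (r i : ℝ) / 2, fun u v => ?_⟩
  have key : |((r u : ℝ)) / 2 - (r v : ℝ) / 2| ≤ 1 ↔ (r u ≤ r v + 2 ∧ r v ≤ r u + 2) := by
    rw [abs_sub_le_iff]
    constructor
    · rintro ⟨h1, h2⟩
      constructor
      · have : (r u : ℝ) ≤ (r v : ℝ) + 2 := by linarith
        exact_mod_cast this
      · have : (r v : ℝ) ≤ (r u : ℝ) + 2 := by linarith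
        exact_mod_cast this
    · rintro ⟨h1, h2⟩
      have h1' : (r u : ℝ) ≤ (r v : ℝ) + 2 := by exact_mod_cast h1
      have h2' : (r v : ℝ) ≤ (r u : ℝ) + 2 := by exact_mod_cast h2
      constructor <;> linarith
  constructor
  · rintro ⟨h1, h2⟩; exact ⟨h1, key.mpr h2⟩
  · rintro ⟨h1, h2⟩; exact ⟨h1, key.mp h2⟩

/-- edge count of the distance-≤2 graph on positions -/
lemma nearG_val_card {n : ℕ} (hn : 3 ≤ n) :
    Nat.card (nearG n (fun i => i.val)).edgeSet = 2 * n - 3 := by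
  set G := nearG n (fun i : Fin n => i.val) with hG
  have adjG : ∀ u v : Fin n, G.Adj u v ↔ u ≠ v ∧ u.val ≤ v.val + 2 ∧ v.val ≤ u.val + 2 :=
    fun u v => Iff.rfl
  have hmem1 : ∀ j : Fin (n - 1), s((⟨j.val, by omega⟩ : Fin n), (⟨j.val + 1, by omega⟩ : Fin n))
      ∈ G.edgeSet := by
    intro j
    rw [SimpleGraph.mem_edgeSet, adjG]
    refine ⟨?_, ?_, ?_⟩
    · intro h; rw [Fin.ext_iff] at h; simp at h
    · simp only [Fin.val_mk]; omega
    · simp only [Fin.val_mk]; omega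
  have hmem2 : ∀ j : Fin (n - 2), s((⟨j.val, by omega⟩ : Fin n), (⟨j.val + 2, by omega⟩ : Fin n))
      ∈ G.edgeSet := by
    intro j
    rw [SimpleGraph.mem_edgeSet, adjG]
    refine ⟨?_, ?_, ?_⟩
    · intro h; rw [Fin.ext_iff] at h; simp at h
    · simp only [Fin.val_mk]; omega
    · simp only [Fin.val_mk]; omega
  have key : Nat.card (Fin (n - 1) ⊕ Fin (n - 2)) = Nat.card G.edgeSet := by
    apply Nat.card_eq_of_bijective (fun z => Sum.rec
      (fun j => (⟨_, hmem1 j⟩ : G.edgeSet)) (fun j => ⟨_, hmem2 j⟩) z)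
    constructor
    · rintro (a | a) (b | b) hab <;>
        simp only [Subtype.mk.injEq, Sym2.eq, Sym2.rel_iff', Prod.mk.injEq, Prod.swap_prod_mk,
          Fin.mk.injEq, Sum.inl.injEq, Sum.inr.injEq] at hab ⊢ <;>
        (first | (apply Fin.ext; omega) | omega)
    · rintro ⟨e, he⟩
      induction e with
      | _ u v =>
        rw [SimpleGraph.mem_edgeSet, adjG] at he
        obtain ⟨hne, h1, h2⟩ := he
        have hne' : u.val ≠ v.val := fun h => hne (Fin.ext h)
        have hu := u.isLt; have hv := v.isLt
        rcases Nat.lt_or_ge u.val v.val with h | h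
        · rcases (by omega : v.val = u.val + 1 ∨ v.val = u.val + 2) with h' | h'
          · refine ⟨Sum.inl ⟨u.val, by omega⟩, Subtype.ext ?_⟩
            have e1 : (⟨u.val, by omega⟩ : Fin n) = u := Fin.ext rfl
            have e2 : (⟨u.val + 1, by omega⟩ : Fin n) = v := Fin.ext (by simp only [Fin.val_mk]; omega)
            simp only [e1, e2]
          · refine ⟨Sum.inr ⟨u.val, by omega⟩, Subtype.ext ?_⟩
            have e1 : (⟨u.val, by omega⟩ : Fin n) = u := Fin.ext rfl
            have e2 : (⟨u.val + 2, by omega⟩ : Fin n) = v := Fin.ext (by simp only [Fin.val_mk]; omega)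
            simp only [e1, e2]
        · rcases (by omega : u.val = v.val + 1 ∨ u.val = v.val + 2) with h' | h'
          · refine ⟨Sum.inl ⟨v.val, by omega⟩, Subtype.ext ?_⟩
            have e1 : (⟨v.val, by omega⟩ : Fin n) = v := Fin.ext rfl
            have e2 : (⟨v.val + 1, by omega⟩ : Fin n) = u := Fin.ext (by simp only [Fin.val_mk]; omega)
            simp only [e1, e2]
            exact Sym2.eq_swap
          · refine ⟨Sum.inr ⟨v.val, by omega⟩, Subtype.ext ?_⟩
            have e1 : (⟨v.val, by omega⟩ : Fin n) = v := Fin.ext rfl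
            have e2 : (⟨v.val + 2, by omega⟩ : Fin n) = u := Fin.ext (by simp only [Fin.val_mk]; omega)
            simp only [e1, e2]
            exact Sym2.eq_swap
  rw [← key]
  simp [Nat.card_eq_fintype_card]
  omega


/-- the zig-zag rank function -/
def rk (n : ℕ) (i : Fin n) : ℕ :=
  if i.val = 0 then 0 else if 2 * i.val ≤ n then 2 * i.val - 1 else 2 * (n - i.val)

lemma rk_lt {n : ℕ} (hn : 3 ≤ n) (i : Fin n) : rk n i < n := by
  have hi := i.isLt
  unfold rk; split_ifs <;> omega

lemma rk_inj {n : ℕ} : Function.Injective (rk n) := by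
  intro i j h
  have hi := i.isLt; have hj := j.isLt
  unfold rk at h
  split_ifs at h <;> (apply Fin.ext; omega)

noncomputable def rkEquiv (n : ℕ) (hn : 3 ≤ n) : Fin n ≃ Fin n :=
  Equiv.ofBijective (fun i => ⟨rk n i, rk_lt hn i⟩)
    (Finite.injective_iff_bijective.mp (fun a b hab => rk_inj (by
      simpa [Fin.ext_iff] using hab)))

lemma nearG_rk_card {n : ℕ} (hn : 3 ≤ n)
    (hval : Nat.card (nearG n (fun i => i.val)).edgeSet = 2 * n - 3) :
    Nat.card (nearG n (rk n)).edgeSet = 2 * n - 3 := by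
  rw [← hval]
  apply Nat.card_congr
  refine SimpleGraph.Iso.mapEdgeSet ⟨rkEquiv n hn, ?_⟩
  intro u v
  show (rkEquiv n hn u ≠ rkEquiv n hn v ∧ _ ∧ _) ↔ (u ≠ v ∧ _ ∧ _)
  have hval : ∀ w : Fin n, (rkEquiv n hn w).val = rk n w := fun w => rfl
  simp only [hval, (rkEquiv n hn).injective.ne_iff]


lemma rk_near {n : ℕ} (hn : 3 ≤ n) {u v : Fin n} (h : (u.val + 1) % n = v.val) :
    rk n u ≤ rk n v + 2 ∧ rk n v ≤ rk n u + 2 := by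
  have hu := u.isLt; have hv := v.isLt
  rcases (by omega : u.val + 1 < n ∨ u.val + 1 = n) with h' | h'
  · rw [Nat.mod_eq_of_lt h'] at h
    unfold rk; split_ifs <;> omega
  · rw [h', Nat.mod_self] at h
    unfold rk; split_ifs <;> omega

lemma cycle_le_nearG {n : ℕ} (hn : 3 ≤ n) : cycleGraph n ≤ nearG n (rk n) := by
  intro u v h
  rw [cycle_adj] at h
  obtain ⟨hne, h | h⟩ := h
  · exact ⟨hne, rk_near hn h⟩
  · obtain ⟨h1, h2⟩ := rk_near hn h
    exact ⟨hne, h2, h1⟩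


lemma adi_mod_small (a n : ℕ) (h : a < 2 * n) :
    a % n = if a < n then a else a - n := by
  split_ifs with h'
  · exact Nat.mod_eq_of_lt h'
  · rw [Nat.mod_eq_sub_mod (by omega)]
    exact Nat.mod_eq_of_lt (by omega)

lemma lower_bound {n : ℕ} (hn : 3 ≤ n) (G' : SimpleGraph (Fin n))
    (hle : cycleGraph n ≤ G') (x : Fin n → ℝ)
    (hx : ∀ u v, G'.Adj u v ↔ (u ≠ v ∧ |x u - x v| ≤ 1)) :
    2 * n - 3 ≤ Nat.card G'.edgeSet := by
  set σ := Tuple.sort x with hσ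
  have mono : Monotone (x ∘ σ) := Tuple.monotone_sort x
  -- the key "skip" claim
  have skip : ∀ j : ℕ, ∀ hj : j + 3 ≤ n,
      x (σ ⟨j + 2, by omega⟩) - x (σ ⟨j, by omega⟩) ≤ 1 := by
    intro j hj
    by_contra hcon
    push_neg at hcon
    set t := σ ⟨j + 1, by omega⟩ with ht
    set q : ℕ → Fin n := fun m => ⟨(t.val + 1 + m) % n, Nat.mod_lt _ (by omega)⟩ with hq
    have qval : ∀ m, m ≤ n - 2 →
        (q m).val = if t.val + 1 + m < n then t.val + 1 + m else t.val + 1 + m - n := by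
      intro m hm
      have htv := t.isLt
      exact adi_mod_small _ n (by omega)
    have qne : ∀ m, m ≤ n - 2 → q m ≠ t := by
      intro m hm h
      have h' := congrArg Fin.val h
      rw [qval m hm] at h'
      have htv := t.isLt
      split_ifs at h' <;> omega
    have qadj : ∀ m, m + 1 ≤ n - 2 → (cycleGraph n).Adj (q m) (q (m + 1)) := by
      intro m hm
      have e1 := qval m (by omega)
      have e2 := qval (m + 1) (by omega)
      have htv := t.isLt
      rw [cycle_adj]
      refine ⟨?_, Or.inl ?_⟩
      · intro h
        have h' := congrArg Fin.val h
        rw [e1, e2] at h'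
        split_ifs at h' <;> omega
      · rw [e1, e2]
        split_ifs with h1 h2 h2
        · rw [Nat.mod_eq_of_lt (by omega)]; omega
        · rw [(by omega : t.val + 1 + m + 1 = n), Nat.mod_self]; omega
        · exact absurd h2 (by omega)
        · rw [(by omega : t.val + 1 + m - n + 1 = t.val + 1 + (m + 1) - n)]
          exact Nat.mod_eq_of_lt (by omega)
    have qrep : ∀ w : Fin n, w ≠ t → ∃ m, m ≤ n - 2 ∧ q m = w := by
      intro w hw
      have hwv := w.isLt; have htv := t.isLt
      have hne : w.val ≠ t.val := fun h => hw (Fin.ext h)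
      rcases Nat.lt_or_ge t.val w.val with h | h
      · refine ⟨w.val - t.val - 1, by omega, Fin.ext ?_⟩
        show (t.val + 1 + (w.val - t.val - 1)) % n = w.val
        rw [(by omega : t.val + 1 + (w.val - t.val - 1) = w.val)]
        exact Nat.mod_eq_of_lt hwv
      · refine ⟨w.val + n - t.val - 1, by omega, Fin.ext ?_⟩
        show (t.val + 1 + (w.val + n - t.val - 1)) % n = w.val
        rw [(by omega : t.val + 1 + (w.val + n - t.val - 1) = w.val + n),
          Nat.add_mod_right, Nat.mod_eq_of_lt hwv]
    -- positions of q m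
    have posneq : ∀ m, m ≤ n - 2 → (σ.symm (q m)).val ≠ j + 1 := by
      intro m hm h
      apply qne m hm
      have : σ.symm (q m) = ⟨j + 1, by omega⟩ := Fin.ext h
      have := congrArg σ this
      rwa [Equiv.apply_symm_apply] at this
    -- a contradiction from any adjacent pair straddling positions j and j+2
    have contra : ∀ m, m + 1 ≤ n - 2 →
        ((σ.symm (q m)).val ≤ j ∧ j + 2 ≤ (σ.symm (q (m + 1))).val ∨
         (σ.symm (q (m + 1))).val ≤ j ∧ j + 2 ≤ (σ.symm (q m)).val) → False := by
      intro m hm hstraddle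
      have adj := hle (qadj m hm)
      have habs := ((hx _ _).mp adj).2
      have key : ∀ w : Fin n, (σ.symm w).val ≤ j → x w ≤ x (σ ⟨j, by omega⟩) := by
        intro w hw
        have : x w = (x ∘ σ) (σ.symm w) := by simp
        rw [this]
        exact mono (by simpa [Fin.le_def] using hw)
      have key2 : ∀ w : Fin n, j + 2 ≤ (σ.symm w).val → x (σ ⟨j + 2, by omega⟩) ≤ x w := by
        intro w hw
        have : x w = (x ∘ σ) (σ.symm w) := by simp
        rw [this]
        exact mono (by simpa [Fin.le_def] using hw)
      rw [abs_le] at habs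
      rcases hstraddle with ⟨h1, h2⟩ | ⟨h1, h2⟩
      · have := key _ h1; have := key2 _ h2; linarith
      · have := key _ h1; have := key2 _ h2; linarith
    -- find a flip point
    have hjt : (⟨j, by omega⟩ : Fin n) ≠ ⟨j + 1, by omega⟩ := by
      simp [Fin.ext_iff]
    have hjt2 : (⟨j + 2, by omega⟩ : Fin n) ≠ ⟨j + 1, by omega⟩ := by
      simp [Fin.ext_iff]
    obtain ⟨m1, hm1le, hm1⟩ := qrep (σ ⟨j, by omega⟩) (fun h => hjt (σ.injective h))
    obtain ⟨m2, hm2le, hm2⟩ := qrep (σ ⟨j + 2, by omega⟩) (fun h => hjt2 (σ.injective h))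
    set p : ℕ → Prop := fun m => (σ.symm (q m)).val ≤ j with hp
    haveI : DecidablePred p := fun m => Nat.decLe _ _
    have hp1 : p m1 := by simp only [hp, hm1, Equiv.symm_apply_apply]; exact le_rfl
    have hp2 : ¬ p m2 := by simp only [hp, hm2, Equiv.symm_apply_apply]; omega
    rcases le_or_gt m1 m2 with hle' | hle'
    · obtain ⟨m, hma, hmb, hpm, hpm1⟩ := adi_ivt p m2 m1 hle' hp1 hp2
      refine contra m (by omega) (Or.inl ⟨hpm, ?_⟩)
      have := posneq (m + 1) (by omega)
      simp only [hp] at hpm1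
      omega
    · obtain ⟨m, hma, hmb, hpm, hpm1⟩ := adi_ivt (fun m => ¬ p m) m1 m2 (by omega) hp2
        (not_not_intro hp1)
      rw [not_not] at hpm1
      refine contra m (by omega) (Or.inr ⟨hpm1, ?_⟩)
      have := posneq m (by omega)
      simp only [hp] at hpm
      omega
  -- consecutive claim
  have cons : ∀ j : ℕ, ∀ hj : j + 2 ≤ n,
      x (σ ⟨j + 1, by omega⟩) - x (σ ⟨j, by omega⟩) ≤ 1 := by
    intro j hj
    rcases (by omega : j + 3 ≤ n ∨ j + 2 = n) with h | h
    · have hs := skip j h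
      have hm : x (σ ⟨j + 1, by omega⟩) ≤ x (σ ⟨j + 2, by omega⟩) :=
        mono (by simp [Fin.le_def])
      linarith
    · have hj1 : 1 ≤ j := by omega
      have hs := skip (j - 1) (by omega)
      have e1 : (⟨j - 1 + 2, by omega⟩ : Fin n) = ⟨j + 1, by omega⟩ :=
        Fin.ext (by simp only [Fin.val_mk]; omega)
      have e2 : (⟨j - 1, by omega⟩ : Fin n) ≤ ⟨j, by omega⟩ := by
        simp only [Fin.mk_le_mk]; omega
      rw [e1] at hs
      have hm : x (σ ⟨j - 1, by omega⟩) ≤ x (σ ⟨j, by omega⟩) := mono e2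
      linarith
  -- now count edges
  have hmem1 : ∀ i : Fin (n - 1),
      s(σ ⟨i.val, by omega⟩, σ ⟨i.val + 1, by omega⟩) ∈ G'.edgeSet := by
    intro i
    have hi := i.isLt
    rw [SimpleGraph.mem_edgeSet, hx]
    refine ⟨fun h => ?_, ?_⟩
    · have := σ.injective h
      simp [Fin.ext_iff] at this
    · have h1 := cons i.val (by omega)
      have h2 : x (σ ⟨i.val, by omega⟩) ≤ x (σ ⟨i.val + 1, by omega⟩) :=
        mono (by simp [Fin.le_def])
      rw [abs_le]; constructor <;> linarith
  have hmem2 : ∀ i : Fin (n - 2),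
      s(σ ⟨i.val, by omega⟩, σ ⟨i.val + 2, by omega⟩) ∈ G'.edgeSet := by
    intro i
    have hi := i.isLt
    rw [SimpleGraph.mem_edgeSet, hx]
    refine ⟨fun h => ?_, ?_⟩
    · have := σ.injective h
      simp [Fin.ext_iff] at this
    · have h1 := skip i.val (by omega)
      have h2 : x (σ ⟨i.val, by omega⟩) ≤ x (σ ⟨i.val + 2, by omega⟩) :=
        mono (by simp [Fin.le_def])
      rw [abs_le]; constructor <;> linarith
  have hcard : Nat.card (Fin (n - 1) ⊕ Fin (n - 2)) ≤ Nat.card G'.edgeSet := by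
    apply Nat.card_le_card_of_injective (fun z => Sum.rec
      (fun i => (⟨_, hmem1 i⟩ : G'.edgeSet)) (fun i => ⟨_, hmem2 i⟩) z)
    rintro (a | a) (b | b) hab <;>
      simp only [Subtype.mk.injEq, Sym2.eq, Sym2.rel_iff', Prod.mk.injEq, Prod.swap_prod_mk,
        σ.injective.eq_iff, Fin.mk.injEq] at hab <;>
      first
      | (simp only [Sum.inl.injEq, Sum.inr.injEq, Fin.ext_iff]; omega)
      | (exfalso; omega)
  rw [Nat.card_eq_fintype_card] at hcard
  simp only [Fintype.card_sum, Fintype.card_fin] at hcard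
  omega


/-- `adi(C_n) = n − 3` for `n ≥ 3`. -/
theorem adi_cycle (n : ℕ) (hn : 3 ≤ n) : adi (cycleGraph n) = n - 3 := by
  have hccard : Nat.card (cycleGraph n).edgeSet = n := cycle_card hn
  have hmem : (n - 3) ∈ {k | ∃ G' : SimpleGraph (Fin n), cycleGraph n ≤ G' ∧ IsUnitInterval G' ∧
      Nat.card G'.edgeSet = Nat.card (cycleGraph n).edgeSet + k} := by
    refine ⟨nearG n (rk n), cycle_le_nearG hn, nearG_unitInterval n (rk n), ?_⟩
    rw [nearG_rk_card hn (nearG_val_card hn), hccard]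
    omega
  apply le_antisymm
  · exact Nat.sInf_le hmem
  · refine le_csInf ⟨_, hmem⟩ ?_
    rintro k ⟨G', h1, ⟨x, hx⟩, h3⟩
    have hlb := lower_bound hn G' h1 x hx
    rw [h3, hccard] at hlb
    omega
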